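/- Let λ_max ≥ λ₀ > λ > 0, let j ∈ {1,…,p} with Px̄^j ≠ 0, let ξ ∈ {+1, −1}, and set x̄ = −ξ·x̄^j. If ⟨Px̄, Px̄*⟩/(‖Px̄‖₂·‖Px̄*‖₂) ∈ (−1, 1], then min_{θ ∈ A} ⟨θ, x̄⟩ = max_{u₁ > 0, u₂ ≥ 0} ḡ(u₁, u₂), where ḡ(u₁, u₂) = −(1/(2u₁))·‖Px̄ + u₂·Px̄*‖₂² + u₂·m(λ₀ − λ) + ⟨θ₀, x̄⟩ − (1/2)·u₁·r²; moreover the maximum on the right-hand side is attained at some (u₁, u₂) with u₁ > 0 and u₂ ≥ 0. -/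

import Mathlib

/-- The dual objective `g(θ) = (1/m) Σ_i [θ_i log θ_i + (1−θ_i) log(1−θ_i)]`. -/
noncomputable def g (m : ℕ) (θ : Fin m → ℝ) : ℝ :=
  (1 / (m : ℝ)) * ∑ i, (θ i * Real.log (θ i) + (1 - θ i) * Real.log (1 - θ i))

/-- The gradient of `g`, componentwise `(1/m) log(θ_i/(1−θ_i))`. -/
noncomputable def gradg (m : ℕ) (θ : Fin m → ℝ) : Fin m → ℝ :=
  fun i => (1 / (m : ℝ)) * Real.log (θ i / (1 - θ i))
/-- The dual feasible set `F_λ`: componentwise in `(0,1)`, `|⟨θ, x̄^j⟩| ≤ mλ` for all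
columns `x̄^j = X j`, and `⟨θ, b⟩ = 0`. -/
def Feas (m p : ℕ) (X : Fin p → Fin m → ℝ) (b : Fin m → ℝ) (lam : ℝ) :
    Set (Fin m → ℝ) :=
  {θ | (∀ i, 0 < θ i ∧ θ i < 1) ∧ (∀ j, |∑ i, θ i * X j i| ≤ (m : ℝ) * lam) ∧
    ∑ i, θ i * b i = 0}
open scoped Classical in
/-- `m⁺ = #{i : b_i = 1}`. -/
noncomputable def mPlus (m : ℕ) (b : Fin m → ℝ) : ℕ :=
  (Finset.univ.filter (fun i => b i = 1)).card

open scoped Classical in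
/-- `m⁻ = #{i : b_i = −1}`. -/
noncomputable def mMinus (m : ℕ) (b : Fin m → ℝ) : ℕ :=
  (Finset.univ.filter (fun i => b i = -1)).card

open scoped Classical in
/-- `θ_max`, with `(θ_max)_i = m⁻/m` if `b_i = 1` and `m⁺/m` if `b_i = −1`. -/
noncomputable def thetaMax (m : ℕ) (b : Fin m → ℝ) : Fin m → ℝ :=
  fun i => if b i = 1 then (mMinus m b : ℝ) / m else (mPlus m b : ℝ) / m

/-- `λ_max = (1/m) max_j |⟨θ_max, x̄^j⟩|`. -/
noncomputable def lamMax (m p : ℕ) (X : Fin p → Fin m → ℝ) (b : Fin m → ℝ) : ℝ :=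
  (1 / (m : ℝ)) * ⨆ j : Fin p, |∑ i, thetaMax m b i * X j i|
/-- `P`, the orthogonal projection onto the orthogonal complement of `b`:
`Pv = v − (⟨v,b⟩/‖b‖₂²) b`. -/
noncomputable def Pb (m : ℕ) (b : Fin m → ℝ) (v : Fin m → ℝ) : Fin m → ℝ :=
  fun i => v i - ((∑ k, v k * b k) / (∑ k, (b k) ^ 2)) * b i


lemma artanh_lb (y : ℝ) (h0 : 0 < y) (h1 : y < 1) :
    2 * y < Real.log (1 + y) - Real.log (1 - y) := by
  set f : ℝ → ℝ := fun x => Real.log (1 + x) - Real.log (1 - x) - 2 * x with hf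
  have hder : ∀ x ∈ Set.Icc (0:ℝ) y, HasDerivAt f (1/(1+x) - (-1)/(1-x) - 2) x := by
    intro x hx
    have hx0 : (0:ℝ) ≤ x := hx.1
    have hxy : x ≤ y := hx.2
    have h1x : (0:ℝ) < 1 + x := by linarith
    have h2x : (0:ℝ) < 1 - x := by linarith
    have d1 : HasDerivAt (fun x : ℝ => 1 + x) 1 x := by
      simpa using (hasDerivAt_id x).const_add (1:ℝ)
    have d2 : HasDerivAt (fun x : ℝ => 1 - x) (-1) x := by
      simpa using (hasDerivAt_id x).const_sub (1:ℝ)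
    have l1 : HasDerivAt (fun x : ℝ => Real.log (1 + x)) (1/(1+x)) x := d1.log h1x.ne'
    have l2 : HasDerivAt (fun x : ℝ => Real.log (1 - x)) ((-1)/(1-x)) x := d2.log h2x.ne'
    have l3 : HasDerivAt (fun x : ℝ => 2 * x) 2 x := by
      simpa using (hasDerivAt_id x).const_mul (2:ℝ)
    exact (l1.sub l2).sub l3
  have hmono : StrictMonoOn f (Set.Icc 0 y) := by
    apply strictMonoOn_of_deriv_pos (convex_Icc 0 y)
    · exact fun x hx => (hder x hx).continuousAt.continuousWithinAt
    · intro x hx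
      rw [interior_Icc] at hx
      have h1x : (0:ℝ) < 1 + x := by linarith [hx.1]
      have h2x : (0:ℝ) < 1 - x := by nlinarith [hx.2, h1]
      rw [(hder x ⟨hx.1.le, hx.2.le⟩).deriv]
      have e : 1/(1+x) - (-1)/(1-x) - 2 = 2*x^2/((1+x)*(1-x)) := by
        field_simp; ring
      rw [e]
      have hx0 : 0 < x := hx.1
      positivity
  have := hmono (Set.left_mem_Icc.2 h0.le) (Set.right_mem_Icc.2 h0.le) h0
  simp [hf] at this
  linarith

lemma log_lb (a t : ℝ) (ha : 0 < a) (hat : a < t) :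
    2 * (t - a) / (t + a) < Real.log t - Real.log a := by
  have hta : (0:ℝ) < t + a := by linarith
  have ht : (0:ℝ) < t := by linarith
  set y : ℝ := (t - a) / (t + a) with hy
  have hy0 : 0 < y := div_pos (by linarith) hta
  have hy1 : y < 1 := (div_lt_one hta).2 (by linarith)
  have key := artanh_lb y hy0 hy1
  have e1 : 1 + y = 2 * t / (t + a) := by field_simp [hy]; linear_combination (by rw [hy]; exact div_mul_cancel₀ _ hta.ne' : y * (t+a) = t - a)
  have e2 : 1 - y = 2 * a / (t + a) := by field_simp [hy]; linear_combination (-1:ℝ) * (by rw [hy]; exact div_mul_cancel₀ _ hta.ne' : y * (t+a) = t - a)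
  have l1 : Real.log (1 + y) = Real.log (2*t) - Real.log (t+a) := by
    rw [e1, Real.log_div (by positivity) hta.ne']
  have l2 : Real.log (1 - y) = Real.log (2*a) - Real.log (t+a) := by
    rw [e2, Real.log_div (by positivity) hta.ne']
  rw [l1, l2, Real.log_mul two_ne_zero ht.ne', Real.log_mul two_ne_zero ha.ne'] at key
  calc 2*(t-a)/(t+a) = 2*y := by rw [hy]; ring
    _ < _ := by linarith

lemma hprime_gap (a t : ℝ) (ha : 0 < a) (hat : a < t) (ht : t < 1) :
    4 * (t - a) < (Real.log t - Real.log (1 - t)) - (Real.log a - Real.log (1 - a)) := by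
  have h1 := log_lb a t ha hat
  have h2 := log_lb (1 - t) (1 - a) (by linarith) (by linarith)
  have hta : (0:ℝ) < t + a := by linarith
  have htb : (0:ℝ) < (1-a) + (1-t) := by linarith
  have hsum : 2*(t-a)/(t+a) + 2*((1-a)-(1-t))/((1-a)+(1-t)) ≥ 4*(t-a) := by
    rw [ge_iff_le, div_add_div _ _ hta.ne' htb.ne', le_div_iff₀ (by positivity)]
    nlinarith [sq_nonneg (t + a - 1), sq_nonneg (t-a)]
  linarith

lemma breg (a t : ℝ) (ha : 0 < a) (hat : a < t) (ht : t < 1) :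
    2 * (a - t)^2 < (a * Real.log a + (1-a) * Real.log (1-a))
      - (t * Real.log t + (1-t) * Real.log (1-t))
      - (Real.log t - Real.log (1-t)) * (a - t) := by
  set L : ℝ := Real.log t - Real.log (1 - t) with hL
  set ψ : ℝ → ℝ := fun x => x * Real.log x + (1-x) * Real.log (1-x) - L * x - 2*(x-t)^2 with hψ
  have hder : ∀ x ∈ Set.Icc a t, HasDerivAt ψ
      ((Real.log x + 1) + (-(Real.log (1-x)) - 1) - L - 4*(x-t)) x := by
    intro x hx
    have hx0 : 0 < x := lt_of_lt_of_le ha hx.1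
    have hx1 : x < 1 := lt_of_le_of_lt hx.2 ht
    have h1x : (0:ℝ) < 1 - x := by linarith
    have d1 : HasDerivAt (fun x : ℝ => x * Real.log x) (Real.log x + 1) x := by
      have := (hasDerivAt_id x).mul (Real.hasDerivAt_log hx0.ne')
      exact this.congr_deriv (by simp [hx0.ne'])
    have d2 : HasDerivAt (fun x : ℝ => (1-x) * Real.log (1-x)) (-(Real.log (1-x)) - 1) x := by
      have du : HasDerivAt (fun x : ℝ => 1 - x) (-1) x := by
        simpa using (hasDerivAt_id x).const_sub (1:ℝ)
      have := du.mul (du.log h1x.ne')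
      exact this.congr_deriv (by linear_combination (-1:ℝ) * mul_inv_cancel₀ h1x.ne')
    have d3 : HasDerivAt (fun x : ℝ => L * x) L x := by
      simpa using (hasDerivAt_id x).const_mul L
    have d4 : HasDerivAt (fun x : ℝ => 2*(x-t)^2) (4*(x-t)) x := by
      have du : HasDerivAt (fun x : ℝ => x - t) 1 x := by
        simpa using (hasDerivAt_id x).sub_const t
      have := ((du.pow 2).const_mul (2:ℝ))
      exact this.congr_deriv (by rw [show (2:ℕ) - 1 = 1 from rfl]; push_cast; ring)
    exact ((d1.add d2).sub d3).sub d4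
  have hanti : StrictAntiOn ψ (Set.Icc a t) := by
    apply strictAntiOn_of_deriv_neg (convex_Icc a t)
    · exact fun x hx => (hder x hx).continuousAt.continuousWithinAt
    · intro x hx
      rw [interior_Icc] at hx
      rw [(hder x ⟨hx.1.le, hx.2.le⟩).deriv]
      have := hprime_gap x t (lt_trans ha hx.1) hx.2 ht
      rw [hL]
      linarith
  have := hanti (Set.left_mem_Icc.2 hat.le) (Set.right_mem_Icc.2 hat.le) hat
  simp only [hψ, hL] at this
  nlinarith [this]

section helpers
variable {ι : Type*} (s : Finset ι)

lemma sum_sub_smul (f g w : ι → ℝ) (x : ℝ) :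
    ∑ i ∈ s, (f i - x * g i) * w i = (∑ i ∈ s, f i * w i) - x * ∑ i ∈ s, g i * w i := by
  rw [Finset.mul_sum, ← Finset.sum_sub_distrib]
  exact Finset.sum_congr rfl fun i _ => by ring

lemma sum_sub_smul2 (f g h w : ι → ℝ) (x y : ℝ) :
    ∑ i ∈ s, (f i - x * g i - y * h i) * w i
      = (∑ i ∈ s, f i * w i) - x * (∑ i ∈ s, g i * w i) - y * ∑ i ∈ s, h i * w i := by
  rw [Finset.mul_sum, Finset.mul_sum, ← Finset.sum_sub_distrib, ← Finset.sum_sub_distrib]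
  exact Finset.sum_congr rfl fun i _ => by ring

lemma sum_sq_add_smul (f g : ι → ℝ) (x : ℝ) :
    ∑ i ∈ s, (f i + x * g i)^2
      = (∑ i ∈ s, f i^2) + 2*x*(∑ i ∈ s, f i * g i) + x^2 * ∑ i ∈ s, g i ^2 := by
  rw [Finset.mul_sum, Finset.mul_sum, ← Finset.sum_add_distrib, ← Finset.sum_add_distrib]
  exact Finset.sum_congr rfl fun i _ => by ring

lemma sum_sq_smul_add_smul (f g : ι → ℝ) (x y : ℝ) :
    ∑ i ∈ s, (x * f i + y * g i)^2
      = x^2 * (∑ i ∈ s, f i^2) + 2*x*y*(∑ i ∈ s, f i * g i) + y^2 * ∑ i ∈ s, g i ^2 := by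
  rw [Finset.mul_sum, Finset.mul_sum, Finset.mul_sum, ← Finset.sum_add_distrib,
    ← Finset.sum_add_distrib]
  exact Finset.sum_congr rfl fun i _ => by ring

lemma sum_smul_mul (f w : ι → ℝ) (x : ℝ) :
    ∑ i ∈ s, (x * f i) * w i = x * ∑ i ∈ s, f i * w i := by
  rw [Finset.mul_sum]; exact Finset.sum_congr rfl fun i _ => by ring

end helpers

lemma Pb_ip_b (m : ℕ) (b v : Fin m → ℝ) (hB : ∑ k, (b k)^2 ≠ 0) :
    ∑ i, Pb m b v i * b i = 0 := by
  simp only [Pb]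
  rw [sum_sub_smul]
  have : ∑ i, b i * b i = ∑ k, (b k)^2 := Finset.sum_congr rfl fun i _ => (sq (b i)).symm
  rw [this, div_mul_cancel₀ _ hB, sub_self]

lemma Pb_ip (m : ℕ) (b v η : Fin m → ℝ) (hηb : ∑ i, η i * b i = 0) :
    ∑ i, Pb m b v i * η i = ∑ i, v i * η i := by
  simp only [Pb]
  rw [sum_sub_smul]
  have : ∑ i, b i * η i = 0 := by
    rw [← hηb]; exact Finset.sum_congr rfl fun i _ => mul_comm _ _
  rw [this, mul_zero, sub_zero]

lemma Pb_smul (m : ℕ) (b v : Fin m → ℝ) (x : ℝ) :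
    Pb m b (fun i => x * v i) = fun i => x * Pb m b v i := by
  funext i
  simp only [Pb]
  rw [sum_smul_mul]
  ring

lemma sum_mul_comm' {ι : Type*} (s : Finset ι) (f g : ι → ℝ) :
    ∑ i ∈ s, f i * g i = ∑ i ∈ s, g i * f i :=
  Finset.sum_congr rfl fun i _ => mul_comm _ _

lemma sum_sub_mul {ι : Type*} (s : Finset ι) (f g w : ι → ℝ) :
    ∑ i ∈ s, (f i - g i) * w i = (∑ i ∈ s, f i * w i) - ∑ i ∈ s, g i * w i := by
  rw [← Finset.sum_sub_distrib]
  exact Finset.sum_congr rfl fun i _ => by ring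

set_option maxHeartbeats 1600000

/-- Lemma 7(a): if `⟨Px̄, Px̄*⟩/(‖Px̄‖₂‖Px̄*‖₂) ∈ (−1, 1]`, then
`min_{θ ∈ A} ⟨θ, x̄⟩ = max_{u₁ > 0, u₂ ≥ 0} ḡ(u₁, u₂)`, and the maximum is attained
at some `(u₁, u₂)` with `u₁ > 0`, `u₂ ≥ 0`. -/
theorem slores_dual_ubp_noncollinear
 (m p : ℕ) (hm : 1 ≤ m) (hp : 1 ≤ p)
    (X : Fin p → Fin m → ℝ) (b : Fin m → ℝ) (hb : ∀ i, b i = 1 ∨ b i = -1)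
    (hmp : 1 ≤ mPlus m b) (hmm : 1 ≤ mMinus m b) (hlmax : 0 < lamMax m p X b)
    (lam lam₀ : ℝ) (hlam : 0 < lam) (hll : lam < lam₀) (hle : lam₀ ≤ lamMax m p X b)
    (θ₀ : Fin m → ℝ)
    (hθ₀ : θ₀ ∈ Feas m p X b lam₀ ∧ ∀ θ ∈ Feas m p X b lam₀, g m θ₀ ≤ g m θ)
    (r : ℝ)
    (hr : r = Real.sqrt (((m : ℝ) / 2) * (g m (fun i => (lam / lam₀) * θ₀ i) - g m θ₀
      + (1 - lam / lam₀) * ∑ i, gradg m θ₀ i * θ₀ i)))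
    (j₀ : Fin p) (hj₀ : |∑ i, θ₀ i * X j₀ i| = (m : ℝ) * lam₀)
    (xstar : Fin m → ℝ)
    (hxstar : xstar = fun i => Real.sign (∑ k, θ₀ k * X j₀ k) * X j₀ i)
    (A : Set (Fin m → ℝ))
    (hA : A = {θ | ∑ i, (θ i - θ₀ i) ^ 2 ≤ r ^ 2 ∧ ∑ i, θ i * b i = 0 ∧
      ∑ i, θ i * xstar i ≤ (m : ℝ) * lam})
    (hPxs : Pb m b xstar ≠ 0)
    (j : Fin p) (hPj : Pb m b (X j) ≠ 0)
    (ξ : ℝ) (hξ : ξ = 1 ∨ ξ = -1)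
    (xbar : Fin m → ℝ) (hxbar : xbar = fun i => -ξ * X j i)
    (gbar : ℝ → ℝ → ℝ)
    (hgbar : gbar = fun u₁ u₂ =>
      -(1 / (2 * u₁)) * ∑ i, (Pb m b xbar i + u₂ * Pb m b xstar i) ^ 2
        + u₂ * ((m : ℝ) * (lam₀ - lam)) + (∑ i, θ₀ i * xbar i) - (1 / 2) * u₁ * r ^ 2)
    (hcos : -1 < (∑ i, Pb m b xbar i * Pb m b xstar i) /
        (Real.sqrt (∑ i, (Pb m b xbar i) ^ 2) * Real.sqrt (∑ i, (Pb m b xstar i) ^ 2)) ∧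
      (∑ i, Pb m b xbar i * Pb m b xstar i) /
        (Real.sqrt (∑ i, (Pb m b xbar i) ^ 2) * Real.sqrt (∑ i, (Pb m b xstar i) ^ 2)) ≤ 1) :
    ∃ u₁ u₂ : ℝ, 0 < u₁ ∧ 0 ≤ u₂ ∧
      (∀ v₁ v₂ : ℝ, 0 < v₁ → 0 ≤ v₂ → gbar v₁ v₂ ≤ gbar u₁ u₂) ∧
      IsLeast ((fun θ => ∑ i, θ i * xbar i) '' A) (gbar u₁ u₂) := by
  
  obtain ⟨⟨hθin, hθcon, hθb⟩, -⟩ := hθ₀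
  have hm0 : (0:ℝ) < m := by exact_mod_cast Nat.lt_of_lt_of_le Nat.zero_lt_one hm
  have hlam₀ : 0 < lam₀ := lt_trans hlam hll
  set s : ℝ := (m:ℝ) * (lam₀ - lam) with hsdef
  have hs : 0 < s := mul_pos hm0 (by linarith)
  have hB : ∑ k, (b k)^2 = (m:ℝ) := by
    rw [Finset.sum_congr rfl (fun k _ => by rcases hb k with h|h <;> rw [h] <;> norm_num :
      ∀ k ∈ Finset.univ, (b k)^2 = (1:ℝ))]
    simp
  have hBne : ∑ k, (b k)^2 ≠ 0 := by rw [hB]; exact hm0.ne'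
  set c : Fin m → ℝ := Pb m b xbar with hcdef
  set d : Fin m → ℝ := Pb m b xstar with hddef
  have hcb : ∑ i, c i * b i = 0 := Pb_ip_b _ _ _ hBne
  have hdb : ∑ i, d i * b i = 0 := Pb_ip_b _ _ _ hBne
  set nc : ℝ := ∑ i, (c i)^2 with hncdef
  set nd : ℝ := ∑ i, (d i)^2 with hnddef
  set κ : ℝ := ∑ i, c i * d i with hκdef
  set cs : ℝ := ∑ i, θ₀ i * xbar i with hcsdef
  -- θ₀ inner product with xstar
  have hθxs : ∑ i, θ₀ i * xstar i = (m:ℝ) * lam₀ := by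
    have hSne : (∑ i, θ₀ i * X j₀ i) ≠ 0 := by
      intro h
      rw [h, abs_zero] at hj₀
      nlinarith
    rw [hxstar]
    have e : ∀ i, θ₀ i * (Real.sign (∑ k, θ₀ k * X j₀ k) * X j₀ i)
        = Real.sign (∑ k, θ₀ k * X j₀ k) * (θ₀ i * X j₀ i) := fun i => by ring
    rw [Finset.sum_congr rfl fun i _ => e i, ← Finset.mul_sum]
    rcases lt_or_gt_of_ne hSne with h|h
    · rw [Real.sign_of_neg h, ← hj₀, abs_of_neg h]; ring
    · rw [Real.sign_of_pos h, ← hj₀, abs_of_pos h]; ring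
  -- the Bregman bound
  set α : ℝ := lam / lam₀ with hα
  have hα0 : 0 < α := div_pos hlam hlam₀
  have hα1 : α < 1 := (div_lt_one hlam₀).2 hll
  have hbregsum : ∑ i, (α * θ₀ i - θ₀ i)^2 < r^2 := by
    haveI : Nonempty (Fin m) := ⟨⟨0, hm⟩⟩
    set D : Fin m → ℝ := fun i =>
      (α * θ₀ i * Real.log (α * θ₀ i) + (1 - α * θ₀ i) * Real.log (1 - α * θ₀ i))
      - (θ₀ i * Real.log (θ₀ i) + (1 - θ₀ i) * Real.log (1 - θ₀ i))
      - (Real.log (θ₀ i) - Real.log (1 - θ₀ i)) * (α * θ₀ i - θ₀ i) with hDdef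
    have hD : ∀ i, 2 * (α * θ₀ i - θ₀ i)^2 < D i := fun i =>
      breg _ _ (mul_pos hα0 (hθin i).1) (by nlinarith [(hθin i).1]) (hθin i).2
    have hsum : ∑ i, 2 * (α * θ₀ i - θ₀ i)^2 < ∑ i, D i :=
      Finset.sum_lt_sum_of_nonempty Finset.univ_nonempty (fun i _ => hD i)
    have hgrad : ∑ i, gradg m θ₀ i * θ₀ i
        = (1/(m:ℝ)) * ∑ i, (Real.log (θ₀ i) - Real.log (1 - θ₀ i)) * θ₀ i := by
      rw [Finset.mul_sum]
      refine Finset.sum_congr rfl fun i _ => ?_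
      have h1t : ((1:ℝ) - θ₀ i) ≠ 0 := (by linarith [(hθin i).2] : (0:ℝ) < 1 - θ₀ i).ne'
      simp only [gradg]
      rw [Real.log_div (hθin i).1.ne' h1t]
      ring
    have hDsum : ∑ i, D i
        = (∑ i, (α * θ₀ i * Real.log (α * θ₀ i) + (1 - α * θ₀ i) * Real.log (1 - α * θ₀ i)))
          - (∑ i, (θ₀ i * Real.log (θ₀ i) + (1 - θ₀ i) * Real.log (1 - θ₀ i)))
          + (1 - α) * ∑ i, (Real.log (θ₀ i) - Real.log (1 - θ₀ i)) * θ₀ i := by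
      rw [Finset.mul_sum, ← Finset.sum_sub_distrib, ← Finset.sum_add_distrib]
      exact Finset.sum_congr rfl fun i _ => by simp only [hDdef]; ring
    have hEeq : (m:ℝ)/2 * (g m (fun i => α * θ₀ i) - g m θ₀
        + (1 - α) * ∑ i, gradg m θ₀ i * θ₀ i) = (1/2) * ∑ i, D i := by
      rw [hgrad, hDsum]
      simp only [g]
      field_simp
    have h2 : ∑ i, 2 * (α * θ₀ i - θ₀ i)^2 = 2 * ∑ i, (α * θ₀ i - θ₀ i)^2 :=
      (Finset.mul_sum _ _ _).symm
    have hfin : ∑ i, (α * θ₀ i - θ₀ i)^2 < (m:ℝ)/2 * (g m (fun i => α * θ₀ i) - g m θ₀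
        + (1 - α) * ∑ i, gradg m θ₀ i * θ₀ i) := by
      rw [hEeq]; linarith
    rw [hr, Real.sq_sqrt (le_trans (Finset.sum_nonneg fun i _ => sq_nonneg _) hfin.le)]
    exact hfin
  have hrnn : 0 ≤ r := by rw [hr]; exact Real.sqrt_nonneg _
  have hr0 : 0 < r := by
    have i0 : Fin m := ⟨0, hm⟩
    have h1 : (α * θ₀ i0 - θ₀ i0)^2 ≤ ∑ i, (α * θ₀ i - θ₀ i)^2 :=
      Finset.single_le_sum (f := fun i => (α * θ₀ i - θ₀ i)^2)
        (fun i _ => sq_nonneg _) (Finset.mem_univ i0)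
    have h2 : (α * θ₀ i0 - θ₀ i0)^2 > 0 := by
      have := (hθin i0).1
      have : α * θ₀ i0 - θ₀ i0 ≠ 0 := by nlinarith
      positivity
    nlinarith
  -- feasible point of A
  have hθ'A : (fun i => α * θ₀ i) ∈ A := by
    rw [hA]
    refine ⟨le_of_lt hbregsum, ?_, ?_⟩
    · rw [sum_smul_mul, hθb, mul_zero]
    · rw [sum_smul_mul, hθxs, hα]
      have : lam / lam₀ * ((m:ℝ) * lam₀) = (m:ℝ) * lam := by field_simp
      rw [this]
  -- ⟨η', d⟩ = -s for η' = αθ₀ - θ₀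
  have hη'b : ∑ i, (α * θ₀ i - θ₀ i) * b i = 0 := by
    rw [Finset.sum_congr rfl (fun i _ => by ring :
      ∀ i ∈ Finset.univ, (α * θ₀ i - θ₀ i) * b i = (α - 1) * (θ₀ i * b i)),
      ← Finset.mul_sum, hθb, mul_zero]
  have hη'd : ∑ i, d i * (α * θ₀ i - θ₀ i) = -s := by
    rw [hddef, Pb_ip m b xstar _ hη'b]
    have : ∀ i, xstar i * (α * θ₀ i - θ₀ i) = α * (θ₀ i * xstar i) - θ₀ i * xstar i :=
      fun i => by ring
    rw [Finset.sum_congr rfl fun i _ => this i, Finset.sum_sub_distrib, ← Finset.mul_sum,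
      hθxs, hsdef, hα]
    field_simp
    ring
  -- positivity of nd, nc
  have hnd : 0 < nd := by
    obtain ⟨i, hi⟩ := Function.ne_iff.1 hPxs
    exact Finset.sum_pos' (fun i _ => sq_nonneg _) ⟨i, Finset.mem_univ i, sq_pos_iff.2 hi⟩
  have hnc : 0 < nc := by
    obtain ⟨i, hi⟩ := Function.ne_iff.1 hPj
    have hcx : c i = -ξ * Pb m b (X j) i := by
      rw [hcdef, hxbar, Pb_smul]
    have : c i ≠ 0 := by
      rw [hcx]
      rcases hξ with h|h <;> rw [h] <;> simpa using hi
    exact Finset.sum_pos' (fun i _ => sq_nonneg _) ⟨i, Finset.mem_univ i, sq_pos_iff.2 this⟩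
  -- r² nd > s²
  have hsd : s^2 < r^2 * nd := by
    have cs2 : (∑ i, d i * (α * θ₀ i - θ₀ i))^2
        ≤ (∑ i, (d i)^2) * (∑ i, (α * θ₀ i - θ₀ i)^2) :=
      Finset.sum_mul_sq_le_sq_mul_sq Finset.univ d (fun i => α * θ₀ i - θ₀ i)
    rw [hη'd, ← hnddef] at cs2
    have h9 : nd * (∑ i, (α * θ₀ i - θ₀ i)^2) < nd * r^2 :=
      mul_lt_mul_of_pos_left hbregsum hnd
    have h10 : (-s)^2 = s^2 := by ring
    rw [h10] at cs2
    linarith only [cs2, h9]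
  -- useful inner products
  have hxc : ∑ i, xbar i * c i = nc := by
    rw [← Pb_ip m b xbar c hcb, ← hcdef, hncdef]
    exact Finset.sum_congr rfl fun i _ => (sq (c i)).symm
  have hxd : ∑ i, xbar i * d i = κ := by
    rw [← Pb_ip m b xbar d hdb, ← hcdef, hκdef]
  have hxsd : ∑ i, xstar i * d i = nd := by
    rw [← Pb_ip m b xstar d hdb, ← hddef, hnddef]
    exact Finset.sum_congr rfl fun i _ => (sq (d i)).symm
  have hxsc : ∑ i, xstar i * c i = κ := by
    rw [← Pb_ip m b xstar c hcb, ← hddef, hκdef]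
    exact sum_mul_comm' _ _ _
  -- weak duality
  have wd : ∀ v₁ v₂ : ℝ, 0 < v₁ → 0 ≤ v₂ → ∀ θ ∈ A, gbar v₁ v₂ ≤ ∑ i, θ i * xbar i := by
    intro v₁ v₂ hv₁ hv₂ θ hθA
    rw [hA] at hθA
    obtain ⟨hball, hθb', hθx'⟩ := hθA
    have hηb : ∑ i, (θ i - θ₀ i) * b i = 0 := by
      rw [sum_sub_mul, hθb', hθb, sub_zero]
    have hT : ∑ i, θ i * xbar i = cs + ∑ i, c i * (θ i - θ₀ i) := by
      rw [hcdef, Pb_ip m b xbar _ hηb]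
      have e : ∀ i, xbar i * (θ i - θ₀ i) = θ i * xbar i - θ₀ i * xbar i := fun i => by ring
      rw [Finset.sum_congr rfl fun i _ => e i, Finset.sum_sub_distrib, hcsdef]
      ring
    have hU : ∑ i, d i * (θ i - θ₀ i) ≤ -s := by
      rw [hddef, Pb_ip m b xstar _ hηb]
      have e : ∀ i, xstar i * (θ i - θ₀ i) = θ i * xstar i - θ₀ i * xstar i := fun i => by ring
      rw [Finset.sum_congr rfl fun i _ => e i, Finset.sum_sub_distrib, hθxs, hsdef]
      linarith
    simp only [hgbar]
    rw [hT]
    set N : ℝ := ∑ i, (c i + v₂ * d i)^2 with hNdef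
    set T : ℝ := ∑ i, c i * (θ i - θ₀ i) with hTdef
    set U : ℝ := ∑ i, d i * (θ i - θ₀ i) with hUdef
    set Aq : ℝ := ∑ i, (θ i - θ₀ i)^2 with hAqdef
    have hq : 0 ≤ v₁^2 * Aq + 2*v₁*(T + v₂*U) + N := by
      have e : v₁^2 * Aq + 2*v₁*(T + v₂*U) + N
          = ∑ i, (v₁*(θ i - θ₀ i) + (c i + v₂*d i))^2 := by
        rw [hAqdef, hTdef, hUdef, hNdef, Finset.mul_sum, Finset.mul_sum,
          ← Finset.sum_add_distrib, Finset.mul_sum, ← Finset.sum_add_distrib,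
          ← Finset.sum_add_distrib]
        exact Finset.sum_congr rfl fun i _ => by ring
      rw [e]
      exact Finset.sum_nonneg fun i _ => sq_nonneg _
    have p1 : 0 ≤ v₁^2*(r^2 - Aq) := mul_nonneg (sq_nonneg _) (by linarith)
    have p2 : 0 ≤ 2*v₁*v₂*(-s - U) :=
      mul_nonneg (mul_nonneg (by linarith) hv₂) (by linarith)
    have key : 0 ≤ 2*v₁*T + N - 2*v₁*v₂*s + v₁^2*r^2 := by linarith
    have e2 : cs + T - (-(1/(2*v₁)) * N + v₂ * s + cs - 1/2 * v₁ * r^2)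
        = (1/(2*v₁)) * (2*v₁*T + N - 2*v₁*v₂*s + v₁^2*r^2) := by
      field_simp
      ring
    linarith [mul_nonneg (by positivity : (0:ℝ) ≤ 1/(2*v₁)) key, e2]
  -- flipped inner products
  have hcxs : ∑ i, c i * xstar i = κ := by rw [sum_mul_comm' Finset.univ c xstar, hxsc]
  have hcxb : ∑ i, c i * xbar i = nc := by rw [sum_mul_comm' Finset.univ c xbar, hxc]
  have hdxb : ∑ i, d i * xbar i = κ := by rw [sum_mul_comm' Finset.univ d xbar, hxd]
  have hdxs : ∑ i, d i * xstar i = nd := by rw [sum_mul_comm' Finset.univ d xstar, hxsd]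
  rcases le_or_gt (s * Real.sqrt nc) (r * κ) with hcase | hcase
  · -- Case 1 : the ball constraint alone is binding
    set q : ℝ := Real.sqrt nc with hqdef
    have hq0 : 0 < q := Real.sqrt_pos.2 hnc
    have hq2 : q^2 = nc := Real.sq_sqrt hnc.le
    set θs : Fin m → ℝ := fun i => θ₀ i - (r/q) * c i with hθsdef
    have hmem : θs ∈ A := by
      rw [hA]
      refine ⟨?_, ?_, ?_⟩
      · have e : ∀ i ∈ Finset.univ, (θs i - θ₀ i)^2 = (r/q)^2 * (c i)^2 :=
          fun i _ => by simp only [hθsdef]; ring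
        rw [Finset.sum_congr rfl e, ← Finset.mul_sum, ← hncdef, ← hq2]
        rw [div_pow, div_mul_cancel₀ _ (pow_ne_zero 2 hq0.ne')]
      · simp only [hθsdef]
        rw [sum_sub_smul, hθb, hcb, mul_zero, sub_zero]
      · simp only [hθsdef]
        rw [sum_sub_smul, hθxs, hcxs]
        have h1 : s ≤ r/q*κ := by
          rw [div_mul_eq_mul_div, le_div_iff₀ hq0]
          linarith only [hcase]
        rw [hsdef] at h1
        linarith only [h1]
    have hval : ∑ i, θs i * xbar i = cs - r * q := by
      simp only [hθsdef]
      rw [sum_sub_smul, ← hcsdef, hcxb, ← hq2]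
      field_simp
    have hgval : gbar (q/r) 0 = cs - r * q := by
      simp only [hgbar]
      have e : ∀ i ∈ Finset.univ, (c i + (0:ℝ) * d i)^2 = (c i)^2 := fun i _ => by ring
      rw [Finset.sum_congr rfl e, ← hncdef, ← hq2]
      field_simp
      ring
    refine ⟨q/r, 0, div_pos hq0 hr0, le_refl 0, ?_, ?_, ?_⟩
    · intro v₁ v₂ hv₁ hv₂
      rw [hgval, ← hval]
      exact wd v₁ v₂ hv₁ hv₂ θs hmem
    · exact ⟨θs, hmem, hval.trans hgval.symm⟩
    · rintro y ⟨θ, hθA, rfl⟩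
      exact wd _ _ (div_pos hq0 hr0) (le_refl 0) θ hθA
  · -- Case 2 : both constraints are binding
    have hρpos : 0 < r^2 - s^2/nd := by
      rw [sub_pos]
      exact (div_lt_iff₀ hnd).2 (by linarith only [hsd])
    set ρ : ℝ := Real.sqrt (r^2 - s^2/nd) with hρdef
    have hρ0 : 0 < ρ := Real.sqrt_pos.2 hρpos
    have hρ2 : ρ^2 = r^2 - s^2/nd := Real.sq_sqrt hρpos.le
    set cp : Fin m → ℝ := fun i => c i - (κ/nd) * d i with hcpdef
    set np : ℝ := ∑ i, (cp i)^2 with hnpdef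
    have hcpd : ∑ i, cp i * d i = 0 := by
      simp only [hcpdef]
      rw [sum_sub_smul, ← hκdef]
      have e : ∀ i ∈ Finset.univ, d i * d i = (d i)^2 := fun i _ => (sq (d i)).symm
      rw [Finset.sum_congr rfl e, ← hnddef]
      field_simp
      ring
    have hdcp : ∑ i, d i * cp i = 0 := by rw [sum_mul_comm' Finset.univ d cp, hcpd]
    have hccp : ∑ i, c i * cp i = np := by
      have e : np = (∑ i, c i * cp i) - (κ/nd) * ∑ i, d i * cp i := by
        rw [hnpdef, ← sum_sub_smul]
        refine Finset.sum_congr rfl fun i _ => ?_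
        simp only [hcpdef]
        ring
      rw [e, hdcp, mul_zero, sub_zero]
    have hnp_eq : np = nc - κ^2/nd := by
      have e : ∀ i ∈ Finset.univ, (cp i)^2 = (c i + (-(κ/nd)) * d i)^2 :=
        fun i _ => by simp only [hcpdef]; ring
      rw [hnpdef, Finset.sum_congr rfl e, sum_sq_add_smul, ← hncdef, ← hκdef, ← hnddef]
      field_simp
      ring
    have hcpb : ∑ i, cp i * b i = 0 := by
      simp only [hcpdef]
      rw [sum_sub_smul, hcb, hdb, mul_zero, sub_zero]
    have hxscp : ∑ i, cp i * xstar i = 0 := by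
      rw [sum_mul_comm' Finset.univ cp xstar, ← Pb_ip m b xstar cp hcpb, ← hddef,
        sum_mul_comm' Finset.univ d cp, hcpd]
    have hxbcp : ∑ i, cp i * xbar i = np := by
      rw [sum_mul_comm' Finset.univ cp xbar, ← Pb_ip m b xbar cp hcpb, ← hcdef, hccp]
    have hnp0 : 0 < np := by
      have hnpnn : 0 ≤ np := by
        rw [hnpdef]; exact Finset.sum_nonneg fun i _ => sq_nonneg _
      rcases eq_or_lt_of_le hnpnn with he | h
      · exfalso
        have hncnd : κ^2 = nc*nd := by
          have h2 := hnp_eq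
          rw [← he] at h2
          field_simp at h2
          linarith only [h2]
        have hQ0 : 0 < Real.sqrt nc * Real.sqrt nd :=
          mul_pos (Real.sqrt_pos.2 hnc) (Real.sqrt_pos.2 hnd)
        have hQ2 : (Real.sqrt nc * Real.sqrt nd)^2 = nc*nd := by
          rw [mul_pow, Real.sq_sqrt hnc.le, Real.sq_sqrt hnd.le]
        have hfac : (κ - Real.sqrt nc * Real.sqrt nd) * (κ + Real.sqrt nc * Real.sqrt nd) = 0 := by
          linear_combination hncnd - hQ2
        rcases mul_eq_zero.1 hfac with h1 | h1
        · -- κ = √nc √nd : contradicts case-2 inequality together with hsd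
          have hκval : κ = Real.sqrt nc * Real.sqrt nd := by linarith only [h1]
          have h3 : r * (Real.sqrt nc * Real.sqrt nd) < s * Real.sqrt nc := by
            rw [← hκval]; exact hcase
          have h4 : r * Real.sqrt nd < s := by
            have h5 : Real.sqrt nc * (r * Real.sqrt nd) < Real.sqrt nc * s := by
              linarith only [h3]
            exact lt_of_mul_lt_mul_left h5 (Real.sqrt_nonneg nc)
          have h6 : (r * Real.sqrt nd)^2 < s^2 :=
            sq_lt_sq' (by linarith only [mul_nonneg hr0.le (Real.sqrt_nonneg nd), hs]) h4
          rw [mul_pow, Real.sq_sqrt hnd.le] at h6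
          linarith only [h6, hsd]
        · -- κ = -√nc √nd : contradicts hcos
          have hκval : κ / (Real.sqrt nc * Real.sqrt nd) = -1 := by
            rw [show κ = -(Real.sqrt nc * Real.sqrt nd) from by linarith only [h1]]
            field_simp
          rw [hκval] at hcos
          exact lt_irrefl _ hcos.1
      · exact h
    set P : ℝ := Real.sqrt np with hPdef
    have hP0 : 0 < P := Real.sqrt_pos.2 hnp0
    have hP2 : P^2 = np := Real.sq_sqrt hnp0.le
    have hu₁0 : 0 < P/ρ := div_pos hP0 hρ0
    have hu₂0 : 0 ≤ (P/ρ*s - κ)/nd := by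
      apply div_nonneg _ hnd.le
      rcases le_or_gt κ 0 with hκ0 | hκ0
      · linarith only [mul_nonneg hu₁0.le hs.le, hκ0]
      · have h2 : (ρ*κ)^2 < (P*s)^2 := by
          have h3 : (r*κ)^2 < (s * Real.sqrt nc)^2 :=
            sq_lt_sq' (by linarith only [mul_nonneg hr0.le hκ0.le, mul_pos hs (Real.sqrt_pos.2 hnc)]) hcase
          rw [mul_pow r κ, mul_pow s, Real.sq_sqrt hnc.le] at h3
          have h4 : (ρ*κ)^2 = (r^2 - s^2/nd)*κ^2 := by rw [mul_pow, hρ2]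
          have h5 : (P*s)^2 = (nc - κ^2/nd)*s^2 := by rw [mul_pow, hP2, hnp_eq]
          rw [h4, h5]
          have h6 : (r^2 - s^2/nd)*κ^2 - (nc - κ^2/nd)*s^2 = r^2*κ^2 - nc*s^2 := by
            field_simp
            ring
          linarith only [h3, h6]
        have h1 : ρ*κ ≤ P*s := le_of_sq_le_sq h2.le (mul_pos hP0 hs).le
        have h7 : κ ≤ P/ρ*s := by
          rw [div_mul_eq_mul_div, le_div_iff₀ hρ0]
          linarith only [h1]
        linarith only [h7]
    set θs : Fin m → ℝ := fun i => θ₀ i - (s/nd) * d i - (ρ/P) * cp i with hθsdef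
    have hmem : θs ∈ A := by
      rw [hA]
      refine ⟨?_, ?_, ?_⟩
      · have e : ∀ i ∈ Finset.univ, (θs i - θ₀ i)^2
            = ((-(s/nd))*d i + (-(ρ/P))*cp i)^2 := fun i _ => by simp only [hθsdef]; ring
        rw [Finset.sum_congr rfl e, sum_sq_smul_add_smul, ← hnddef, ← hnpdef, hdcp]
        have e2 : (-(s/nd))^2*nd + 2*(-(s/nd))*(-(ρ/P))*0 + (-(ρ/P))^2*np
            = s^2/nd + ρ^2 := by
          rw [← hP2]
          field_simp
          ring
        rw [e2, hρ2]
        simp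
      · simp only [hθsdef]
        rw [sum_sub_smul2, hθb, hdb, hcpb, mul_zero, mul_zero, sub_zero, sub_zero]
      · simp only [hθsdef]
        rw [sum_sub_smul2, hθxs, hdxs, hxscp, mul_zero, sub_zero,
          div_mul_cancel₀ _ hnd.ne', hsdef]
        exact le_of_eq (by ring)
    have hval : ∑ i, θs i * xbar i = cs - (s/nd)*κ - ρ*P := by
      simp only [hθsdef]
      rw [sum_sub_smul2, ← hcsdef, hdxb, hxbcp, ← hP2]
      field_simp
    have hgval : gbar (P/ρ) ((P/ρ*s - κ)/nd) = cs - (s/nd)*κ - ρ*P := by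
      simp only [hgbar]
      rw [sum_sq_add_smul, ← hncdef, ← hκdef, ← hnddef]
      have hnc' : nc = P^2 + κ^2/nd := by
        rw [hP2, hnp_eq]
        field_simp
        ring
      have hr2' : r^2 = ρ^2 + s^2/nd := by rw [hρ2]; ring
      rw [hnc', hr2']
      field_simp
      ring
    refine ⟨P/ρ, (P/ρ*s - κ)/nd, hu₁0, hu₂0, ?_, ?_, ?_⟩
    · intro v₁ v₂ hv₁ hv₂
      rw [hgval, ← hval]
      exact wd v₁ v₂ hv₁ hv₂ θs hmem
    · exact ⟨θs, hmem, hval.trans hgval.symm⟩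
    · rintro y ⟨θ, hθA, rfl⟩
      exact wd _ _ hu₁0 hu₂0 θ hθA
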